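/- Let c > 0, let E : ℝ × ℝ³ → ℝ³ be a smooth vector field, and let φ : ℝ × ℝ³ → ℝ be a smooth solution of the wave equation Δφ − c⁻² ∂_t² φ + div E = 0 satisfying ∂_t φ(0, x) = 0 for all x ∈ ℝ³. Define ψ(t,x) := ∫₀ᵗ φ(s,x) ds and A_j(t,x) := −∫₀ᵗ E_j(s,x) ds − ∂_j ψ(t,x) for j = 1,2,3. Then the pair (A, φ) is smooth and solves the first-order hyperbolic system ∂_t A + ∇φ = −E together with the Lorenz gauge condition div A + c⁻² ∂_t φ = 0 everywhere. (The explicit construction of a Lorentzian 4-potential in the proof of the paper's Theorem on Lorentzian 4-potentials.) -/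

import Mathlib

open scoped BigOperators

noncomputable section

/-- Points of space-time: time paired with a spatial point. -/
abbrev SpaceTime : Type := ℝ × (Fin 3 → ℝ)

/-- Spatial partial derivative in coordinate direction `j`. -/
def pd (j : Fin 3) (f : (Fin 3 → ℝ) → ℝ) (x : Fin 3 → ℝ) : ℝ :=
  fderiv ℝ f x (Pi.single j 1)

/-- Spatial divergence of a time-dependent vector field. -/
def div3 (F : SpaceTime → (Fin 3 → ℝ)) (t : ℝ) (x : Fin 3 → ℝ) : ℝ :=
  ∑ j : Fin 3, pd j (fun y => F (t, y) j) x

/-- `j`-th component of the spatial curl of a time-dependent vector field. -/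
def curl3 (F : SpaceTime → (Fin 3 → ℝ)) (t : ℝ) (x : Fin 3 → ℝ) (j : Fin 3) : ℝ :=
  pd (j + 1) (fun y => F (t, y) (j + 2)) x - pd (j + 2) (fun y => F (t, y) (j + 1)) x

/-- `j`-th component of the spatial gradient of a time-dependent scalar field. -/
def grad3 (f : SpaceTime → ℝ) (t : ℝ) (x : Fin 3 → ℝ) (j : Fin 3) : ℝ :=
  pd j (fun y => f (t, y)) x

/-- Time derivative of a time-dependent scalar field. -/
def dt1 (f : SpaceTime → ℝ) (t : ℝ) (x : Fin 3 → ℝ) : ℝ :=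
  deriv (fun s => f (s, x)) t

/-- Second time derivative of a time-dependent scalar field. -/
def dt2 (f : SpaceTime → ℝ) (t : ℝ) (x : Fin 3 → ℝ) : ℝ :=
  deriv (fun s => dt1 f s x) t

/-- Spatial Laplacian of a time-dependent scalar field. -/
def lap3 (f : SpaceTime → ℝ) (t : ℝ) (x : Fin 3 → ℝ) : ℝ :=
  ∑ j : Fin 3, pd j (fun y => pd j (fun z => f (t, z)) y) x


set_option synthInstance.maxHeartbeats 1000000
set_option maxHeartbeats 1000000
set_option linter.unusedSectionVars false

open intervalIntegral MeasureTheory Set Metric Filter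

section AuxLemmas

variable {F : Type} [NormedAddCommGroup F] [NormedSpace ℝ F] [CompleteSpace F]

lemma infty_succ_le : ((⊤:ℕ∞) : WithTop ℕ∞) + 1 ≤ ((⊤:ℕ∞) : WithTop ℕ∞) := by
  exact_mod_cast le_refl _

lemma one_le_infty : (1 : WithTop ℕ∞) ≤ ((⊤:ℕ∞) : WithTop ℕ∞) := by
  exact_mod_cast le_top

def Lst : SpaceTime →L[ℝ] SpaceTime × ℝ :=
  (ContinuousLinearMap.id ℝ SpaceTime).prod 0

def Rst : (Fin 3 → ℝ) →L[ℝ] SpaceTime :=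
  (0 : (Fin 3 → ℝ) →L[ℝ] ℝ).prod (ContinuousLinearMap.id ℝ (Fin 3 → ℝ))

lemma hasFDerivAt_slice_fst (g : SpaceTime × ℝ → F) (hg : ContDiff ℝ (⊤:ℕ∞) g)
    (u : ℝ) (p : SpaceTime) :
    HasFDerivAt (fun q => g (q, u)) ((fderiv ℝ g (p, u)).comp Lst) p :=
  ((hg.differentiable (by simp) (p, u)).hasFDerivAt).comp p
    ((hasFDerivAt_id p).prodMk (hasFDerivAt_const u p))

lemma hasFDerivAt_paramInt (g : SpaceTime × ℝ → F) (hg : ContDiff ℝ (⊤:ℕ∞) g) (p₀ : SpaceTime) :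
    HasFDerivAt (fun p : SpaceTime => ∫ u in (0:ℝ)..1, g (p, u))
      (∫ u in (0:ℝ)..1, (fderiv ℝ g (p₀, u)).comp Lst) p₀ := by
  have hgc : Continuous g := hg.continuous
  have hcont : Continuous fun q : SpaceTime × ℝ => (fderiv ℝ g q).comp Lst :=
    ((hg.fderiv_right infty_succ_le).continuous).clm_comp continuous_const
  obtain ⟨C, hC⟩ := ((isCompact_closedBall p₀ 1).prod isCompact_uIcc).exists_bound_of_continuousOn
    hcont.continuousOn
  apply intervalIntegral.hasFDerivAt_integral_of_dominated_of_fderiv_le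
    (F := fun p u => g (p, u)) (F' := fun p u => (fderiv ℝ g (p, u)).comp Lst)
    (bound := fun _ => C) (s := ball p₀ 1) (ball_mem_nhds p₀ one_pos)
  · exact Filter.Eventually.of_forall fun p =>
      (hgc.comp (continuous_const.prodMk continuous_id)).aestronglyMeasurable
  · exact (hgc.comp (continuous_const.prodMk continuous_id)).intervalIntegrable 0 1
  · exact (hcont.comp (continuous_const.prodMk continuous_id)).aestronglyMeasurable
  · refine Filter.Eventually.of_forall fun u hu p hp => hC (p, u) ⟨ball_subset_closedBall hp, ?_⟩
    exact uIoc_subset_uIcc hu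
  · exact intervalIntegrable_const
  · exact Filter.Eventually.of_forall fun u _ p _ => hasFDerivAt_slice_fst g hg u p

theorem contDiff_paramInt : ∀ (n : ℕ) {F : Type} [NormedAddCommGroup F] [NormedSpace ℝ F]
    [CompleteSpace F] (g : SpaceTime × ℝ → F), ContDiff ℝ (⊤:ℕ∞) g →
    ContDiff ℝ (n : ℕ) (fun p : SpaceTime => ∫ u in (0:ℝ)..1, g (p, u)) := by
  intro n
  induction n with
  | zero =>
    intro F _ _ _ g hg
    have : Differentiable ℝ (fun p : SpaceTime => ∫ u in (0:ℝ)..1, g (p, u)) :=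
      fun p => (hasFDerivAt_paramInt g hg p).differentiableAt
    exact_mod_cast contDiff_zero.mpr this.continuous
  | succ n ih =>
    intro F _ _ _ g hg
    have hcast : ((n + 1 : ℕ) : WithTop ℕ∞) = (n : WithTop ℕ∞) + 1 := by norm_cast
    rw [hcast, contDiff_succ_iff_fderiv]
    refine ⟨fun p => (hasFDerivAt_paramInt g hg p).differentiableAt, by simp, ?_⟩
    have heq : fderiv ℝ (fun p : SpaceTime => ∫ u in (0:ℝ)..1, g (p, u)) =
        fun p => ∫ u in (0:ℝ)..1, (fun q : SpaceTime × ℝ => (fderiv ℝ g q).comp Lst) (p, u) :=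
      funext fun p => (hasFDerivAt_paramInt g hg p).fderiv
    rw [heq]
    exact ih _ ((hg.fderiv_right infty_succ_le).clm_comp contDiff_const)

theorem contDiff_primitive (f : SpaceTime → F) (hf : ContDiff ℝ (⊤:ℕ∞) f) :
    ContDiff ℝ (⊤:ℕ∞) (fun p : SpaceTime => ∫ s in (0:ℝ)..p.1, f (s, p.2)) := by
  have hg : ContDiff ℝ (⊤:ℕ∞) (fun q : SpaceTime × ℝ => q.1.1 • f (q.1.1 * q.2, q.1.2)) := by
    apply ContDiff.smul (contDiff_fst.comp contDiff_fst)
    exact hf.comp (((contDiff_fst.comp contDiff_fst).mul contDiff_snd).prodMk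
      (contDiff_snd.comp contDiff_fst))
  have heq : (fun p : SpaceTime => ∫ s in (0:ℝ)..p.1, f (s, p.2)) =
      fun p : SpaceTime => ∫ u in (0:ℝ)..1, p.1 • f (p.1 * u, p.2) := by
    funext p
    rw [intervalIntegral.integral_smul]
    have := intervalIntegral.smul_integral_comp_mul_left (f := fun s => f (s, p.2))
      (a := (0:ℝ)) (b := 1) p.1
    simpa using this.symm
  rw [heq]
  exact contDiff_infty.mpr fun n => contDiff_paramInt n _ hg

lemma hasFDerivAt_slice_snd (f : SpaceTime → F) (hf : ContDiff ℝ (⊤:ℕ∞) f)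
    (s : ℝ) (x : Fin 3 → ℝ) :
    HasFDerivAt (fun y => f (s, y)) ((fderiv ℝ f (s, x)).comp Rst) x :=
  ((hf.differentiable (by simp) (s, x)).hasFDerivAt).comp x
    ((hasFDerivAt_const s x).prodMk (hasFDerivAt_id x))

lemma hasFDerivAt_intInt_space (f : SpaceTime → F) (hf : ContDiff ℝ (⊤:ℕ∞) f)
    (t : ℝ) (x₀ : Fin 3 → ℝ) :
    HasFDerivAt (fun x => ∫ s in (0:ℝ)..t, f (s, x))
      (∫ s in (0:ℝ)..t, (fderiv ℝ f (s, x₀)).comp Rst) x₀ := by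
  have hfc : Continuous f := hf.continuous
  have hcont : Continuous fun q : SpaceTime => (fderiv ℝ f q).comp Rst :=
    ((hf.fderiv_right infty_succ_le).continuous).clm_comp continuous_const
  have hcont2 : Continuous fun q : (Fin 3 → ℝ) × ℝ =>
      (fderiv ℝ f (q.2, q.1)).comp Rst :=
    hcont.comp (continuous_snd.prodMk continuous_fst)
  obtain ⟨C, hC⟩ := ((isCompact_closedBall x₀ 1).prod isCompact_uIcc).exists_bound_of_continuousOn
    hcont2.continuousOn
  apply intervalIntegral.hasFDerivAt_integral_of_dominated_of_fderiv_le
    (F := fun x s => f (s, x)) (F' := fun x s => (fderiv ℝ f (s, x)).comp Rst)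
    (bound := fun _ => C) (s := ball x₀ 1) (ball_mem_nhds x₀ one_pos)
  · exact Filter.Eventually.of_forall fun x =>
      (hfc.comp (continuous_id.prodMk continuous_const)).aestronglyMeasurable
  · exact (hfc.comp (continuous_id.prodMk continuous_const)).intervalIntegrable 0 t
  · exact (hcont.comp (continuous_id.prodMk continuous_const)).aestronglyMeasurable
  · refine Filter.Eventually.of_forall fun s hs x hx => hC (x, s) ⟨ball_subset_closedBall hx, ?_⟩
    exact uIoc_subset_uIcc hs
  · exact intervalIntegrable_const
  · exact Filter.Eventually.of_forall fun s _ x _ => hasFDerivAt_slice_snd f hf s x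

lemma pd_slice (f : SpaceTime → ℝ) (hf : ContDiff ℝ (⊤:ℕ∞) f) (t : ℝ) (x : Fin 3 → ℝ)
    (j : Fin 3) :
    pd j (fun y => f (t, y)) x = fderiv ℝ f (t, x) (0, Pi.single j 1) := by
  unfold pd
  rw [(hasFDerivAt_slice_snd f hf t x).fderiv]
  simp [Rst]

lemma pd_intervalIntegral (f : SpaceTime → ℝ) (hf : ContDiff ℝ (⊤:ℕ∞) f) (t : ℝ)
    (x : Fin 3 → ℝ) (j : Fin 3) :
    pd j (fun y => ∫ s in (0:ℝ)..t, f (s, y)) x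
      = ∫ s in (0:ℝ)..t, fderiv ℝ f (s, x) (0, Pi.single j 1) := by
  have hcont : Continuous fun s : ℝ => (fderiv ℝ f (s, x)).comp Rst :=
    (((hf.fderiv_right infty_succ_le).continuous).clm_comp continuous_const).comp
      (continuous_id.prodMk continuous_const)
  unfold pd
  rw [(hasFDerivAt_intInt_space f hf t x).fderiv,
    ContinuousLinearMap.intervalIntegral_apply (hcont.intervalIntegrable 0 t) (Pi.single j 1)]
  simp [Rst]

lemma pd_neg (f : (Fin 3 → ℝ) → ℝ) (x : Fin 3 → ℝ) (j : Fin 3) :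
    pd j (fun y => -f y) x = -pd j f x := by
  unfold pd
  rw [fderiv_fun_neg]
  simp

lemma pd_add (f g : (Fin 3 → ℝ) → ℝ) (x : Fin 3 → ℝ) (j : Fin 3)
    (hf : DifferentiableAt ℝ f x) (hg : DifferentiableAt ℝ g x) :
    pd j (fun y => f y + g y) x = pd j f x + pd j g x := by
  unfold pd
  rw [fderiv_fun_add hf hg]
  simp

end AuxLemmas

/-- explicit construction of a Lorentzian 4-potential from a
solution `φ` of the wave equation with `∂ₜφ(0,·) = 0`:
with `ψ(t,x) = ∫₀ᵗ φ(s,x) ds` and `Aⱼ = -∫₀ᵗ Eⱼ ds - ∂ⱼψ`, the pair `(A, φ)`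
is smooth and solves `∂ₜA + ∇φ = -E` together with the Lorenz gauge. -/
theorem potential_construction
    (c : ℝ) (hc : 0 < c)
    (E : SpaceTime → (Fin 3 → ℝ)) (hE : ContDiff ℝ (⊤ : ℕ∞) E)
    (φ : SpaceTime → ℝ) (hφ : ContDiff ℝ (⊤ : ℕ∞) φ)
    (hwave : ∀ (t : ℝ) (x : Fin 3 → ℝ),
      lap3 φ t x - c⁻¹ ^ 2 * dt2 φ t x + div3 E t x = 0)
    (hinit : ∀ x : Fin 3 → ℝ, dt1 φ 0 x = 0)
    (ψ : SpaceTime → ℝ)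
    (hψ : ∀ (t : ℝ) (x : Fin 3 → ℝ), ψ (t, x) = ∫ s in (0:ℝ)..t, φ (s, x))
    (A : SpaceTime → (Fin 3 → ℝ))
    (hA : ∀ (t : ℝ) (x : Fin 3 → ℝ) (j : Fin 3),
      A (t, x) j = -(∫ s in (0:ℝ)..t, E (s, x) j) - pd j (fun y => ψ (t, y)) x) :
    ContDiff ℝ (⊤ : ℕ∞) A ∧
    (∀ (t : ℝ) (x : Fin 3 → ℝ) (j : Fin 3),
      dt1 (fun p => A p j) t x + grad3 φ t x j = -E (t, x) j) ∧
    (∀ (t : ℝ) (x : Fin 3 → ℝ),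
      div3 A t x + c⁻¹ ^ 2 * dt1 φ t x = 0) := by
  classical
  set w : Fin 3 → SpaceTime → ℝ :=
    fun j q => E q j + fderiv ℝ φ q (0, Pi.single j 1) with hw_def
  have hw : ∀ j, ContDiff ℝ (⊤:ℕ∞) (w j) := fun j =>
    (contDiff_pi.mp hE j).add ((hφ.fderiv_right infty_succ_le).clm_apply contDiff_const)
  have hEjc : ∀ j, Continuous fun q : SpaceTime => E q j :=
    fun j => (contDiff_pi.mp hE j).continuous
  have hDjc : ∀ j : Fin 3, Continuous fun q : SpaceTime => fderiv ℝ φ q (0, Pi.single j 1) :=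
    fun j => ((hφ.fderiv_right infty_succ_le).clm_apply contDiff_const).continuous
  have hAeq : ∀ (t : ℝ) (x : Fin 3 → ℝ) (j : Fin 3),
      A (t, x) j = -∫ s in (0:ℝ)..t, w j (s, x) := by
    intro t x j
    rw [hA]
    have h1 : (fun y => ψ (t, y)) = fun y => ∫ s in (0:ℝ)..t, φ (s, y) :=
      funext fun y => hψ t y
    rw [h1, pd_intervalIntegral φ hφ t x j]
    have h2 : (∫ s in (0:ℝ)..t, w j (s, x))
        = (∫ s in (0:ℝ)..t, E (s, x) j)
          + ∫ s in (0:ℝ)..t, fderiv ℝ φ (s, x) (0, Pi.single j 1) := by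
      simp only [hw_def]
      exact intervalIntegral.integral_add
        (((hEjc j).comp (continuous_id.prodMk continuous_const)).intervalIntegrable 0 t)
        (((hDjc j).comp (continuous_id.prodMk continuous_const)).intervalIntegrable 0 t)
    rw [h2]
    ring
  have hAfun : A = fun p => fun j => -∫ s in (0:ℝ)..p.1, w j (s, p.2) := by
    funext p j
    simpa using hAeq p.1 p.2 j
  refine ⟨?_, ?_, ?_⟩
  · rw [hAfun]
    exact contDiff_pi.mpr fun j => (contDiff_primitive (w j) (hw j)).neg
  · intro t x j
    have hslice : (fun s => A (s, x) j) = fun s => -∫ r in (0:ℝ)..s, w j (r, x) :=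
      funext fun s => hAeq s x j
    have hwc : Continuous fun r : ℝ => w j (r, x) :=
      (hw j).continuous.comp (continuous_id.prodMk continuous_const)
    have hd : HasDerivAt (fun s => -∫ r in (0:ℝ)..s, w j (r, x)) (-(w j (t, x))) t :=
      ((hwc.integral_hasStrictDerivAt 0 t).hasDerivAt).neg
    have hdt : dt1 (fun p => A p j) t x = -(w j (t, x)) := by
      unfold dt1
      rw [hslice]
      exact hd.deriv
    have hgr : grad3 φ t x j = fderiv ℝ φ (t, x) (0, Pi.single j 1) := pd_slice φ hφ t x j
    rw [hdt, hgr]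
    simp only [hw_def]
    ring
  · intro t x
    have hpdA : ∀ j : Fin 3, pd j (fun y => A (t, y) j) x
        = -∫ s in (0:ℝ)..t, fderiv ℝ (w j) (s, x) (0, Pi.single j 1) := by
      intro j
      have h1 : (fun y => A (t, y) j) = fun y => -∫ s in (0:ℝ)..t, w j (s, y) :=
        funext fun y => hAeq t y j
      rw [h1, pd_neg (fun y => ∫ s in (0:ℝ)..t, w j (s, y)) x j,
        pd_intervalIntegral (w j) (hw j) t x j]
    have hint : ∀ j : Fin 3, Continuous fun s : ℝ => fderiv ℝ (w j) (s, x) (0, Pi.single j 1) :=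
      fun j => ((((hw j).fderiv_right infty_succ_le).clm_apply contDiff_const).continuous).comp
        (continuous_id.prodMk continuous_const)
    have hsum : ∀ s : ℝ, (∑ j : Fin 3, fderiv ℝ (w j) (s, x) (0, Pi.single j 1))
        = c⁻¹ ^ 2 * dt2 φ s x := by
      intro s
      have h1 : ∀ j : Fin 3, fderiv ℝ (w j) (s, x) (0, Pi.single j 1)
          = pd j (fun y => E (s, y) j) x + pd j (fun y => pd j (fun z => φ (s, z)) y) x := by
        intro j
        rw [← pd_slice (w j) (hw j) s x j]
        have hEd : DifferentiableAt ℝ (fun y => E (s, y) j) x :=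
          (hasFDerivAt_slice_snd (F := ℝ) (fun q => E q j) (contDiff_pi.mp hE j)
            s x).differentiableAt
        have hDd : DifferentiableAt ℝ (fun y => fderiv ℝ φ (s, y) (0, Pi.single j 1)) x :=
          (hasFDerivAt_slice_snd (F := ℝ) _
            ((hφ.fderiv_right infty_succ_le).clm_apply contDiff_const) s x).differentiableAt
        have h3 : (fun y => fderiv ℝ φ (s, y) (0, Pi.single j 1))
            = fun y => pd j (fun z => φ (s, z)) y :=
          funext fun y => (pd_slice φ hφ s y j).symm
        calc pd j (fun y => w j (s, y)) x
            = pd j (fun y => E (s, y) j + fderiv ℝ φ (s, y) (0, Pi.single j 1)) x := by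
              simp only [hw_def]
          _ = pd j (fun y => E (s, y) j) x
              + pd j (fun y => fderiv ℝ φ (s, y) (0, Pi.single j 1)) x :=
              pd_add _ _ x j hEd hDd
          _ = pd j (fun y => E (s, y) j) x
              + pd j (fun y => pd j (fun z => φ (s, z)) y) x := by rw [h3]
      have hE3 : (∑ j : Fin 3, pd j (fun y => E (s, y) j) x) = div3 E s x := rfl
      have hL3 : (∑ j : Fin 3, pd j (fun y => pd j (fun z => φ (s, z)) y) x) = lap3 φ s x := rfl
      simp only [h1]
      rw [Finset.sum_add_distrib, hE3, hL3]
      linarith [hwave s x]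
    have hdiv : div3 A t x = -∫ s in (0:ℝ)..t, c⁻¹ ^ 2 * dt2 φ s x := by
      unfold div3
      simp only [hpdA]
      rw [Finset.sum_neg_distrib,
        ← intervalIntegral.integral_finset_sum (fun j _ => (hint j).intervalIntegrable 0 t)]
      exact congrArg Neg.neg (intervalIntegral.integral_congr fun s _ => hsum s)
    have hu : ContDiff ℝ (⊤:ℕ∞) (fun s => φ (s, x)) :=
      hφ.comp (contDiff_id.prodMk contDiff_const)
    have hu1 : ContDiff ℝ (⊤:ℕ∞) (deriv fun s => φ (s, x)) :=
      (contDiff_infty_iff_deriv.mp hu).2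
    have hu2 : ContDiff ℝ (⊤:ℕ∞) (deriv (deriv fun s => φ (s, x))) :=
      (contDiff_infty_iff_deriv.mp hu1).2
    have hdt2 : (∫ s in (0:ℝ)..t, dt2 φ s x) = dt1 φ t x - dt1 φ 0 x := by
      have hFTC := intervalIntegral.integral_deriv_eq_sub
        (f := deriv fun s => φ (s, x)) (a := 0) (b := t)
        (fun s _ => hu1.differentiable (by simp) s)
        (hu2.continuous.intervalIntegrable 0 t)
      exact hFTC
    rw [hdiv, intervalIntegral.integral_const_mul, hdt2, hinit x]
    ring
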